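/- Let S ⊆ [0,∞) with 0 ∈ S and S containing a positive element, let M be a set with a distinguished point o ∈ M. Let L(S, M, o) be the set of functions f : S ∖ {0} → M that are eventually o-valued (there exists C ∈ S, C > 0, such that f(q) = o for all q > C). Define Δ(f,g) = sup{q ∈ S, q > 0 : f(q) ≠ g(q)} (and 0 if the set is empty). Then (L(S,M,o), Δ) is a complete ultrametric space whose distances lie in the closure of S in [0,∞). -/

import Mathlib

/-- The positive part of a range set `S`, as a subtype. -/
def Spos (S : Set ℝ) : Type := {q : ℝ // q ∈ S ∧ q ≠ 0}

/-- Eventually `o`-valued maps from `S₊` to `M` (with the eventual bound in `S₊`). -/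
def LL (S : Set ℝ) (M : Type*) (o : M) : Type _ :=
  {f : Spos S → M // ∃ C ∈ S, 0 < C ∧ ∀ q : Spos S, C < q.1 → f q = o}

/-- The Lemin–Lemin distance: the supremum of the points where `f` and `g` differ
(and `0` if they agree everywhere). -/
noncomputable def LLdist {S : Set ℝ} {M : Type*} {o : M} (f g : LL S M o) : ℝ :=
  sSup ({0} ∪ {q : ℝ | ∃ h : q ∈ S ∧ q ≠ 0, f.1 ⟨q, h⟩ ≠ g.1 ⟨q, h⟩})

namespace Stmt16Aux

variable {S : Set ℝ} {M : Type*} {o : M}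

def A (f g : LL S M o) : Set ℝ :=
  {0} ∪ {q : ℝ | ∃ h : q ∈ S ∧ q ≠ 0, f.1 ⟨q, h⟩ ≠ g.1 ⟨q, h⟩}

lemma LLdist_eq (f g : LL S M o) : LLdist f g = sSup (A f g) := rfl

lemma A_nonempty (f g : LL S M o) : (A f g).Nonempty := ⟨0, Or.inl rfl⟩

lemma zero_mem_A (f g : LL S M o) : (0:ℝ) ∈ A f g := Or.inl rfl

lemma A_bdd (f g : LL S M o) : BddAbove (A f g) := by
  obtain ⟨Cf, hCf, hCf0, hf⟩ := f.2
  obtain ⟨Cg, hCg, hCg0, hg⟩ := g.2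
  refine ⟨max Cf Cg, ?_⟩
  rintro x (rfl | ⟨hx, hne⟩)
  · exact le_max_of_le_left hCf0.le
  · by_contra hlt
    push_neg at hlt
    have h1 := hf ⟨x, hx⟩ (lt_of_le_of_lt (le_max_left _ _) hlt)
    have h2 := hg ⟨x, hx⟩ (lt_of_le_of_lt (le_max_right _ _) hlt)
    exact hne (h1.trans h2.symm)

lemma LLdist_nonneg (f g : LL S M o) : 0 ≤ LLdist f g :=
  le_csSup (A_bdd f g) (zero_mem_A f g)

lemma le_LLdist {f g : LL S M o} {x : ℝ} (hx : x ∈ A f g) : x ≤ LLdist f g :=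
  le_csSup (A_bdd f g) hx

lemma agree_of_lt {f g : LL S M o} {q : ℝ} (h : q ∈ S ∧ q ≠ 0)
    (hq : LLdist f g < q) : f.1 ⟨q, h⟩ = g.1 ⟨q, h⟩ := by
  by_contra hne
  exact absurd (le_LLdist (f := f) (g := g) (Or.inr ⟨h, hne⟩)) (not_le.2 hq)

lemma qpos (hS : S ⊆ Set.Ici 0) (q : Spos S) : 0 < q.1 :=
  lt_of_le_of_ne (hS q.2.1) (Ne.symm q.2.2)

end Stmt16Aux

open Stmt16Aux in
/-- `(L(S,M,o), Δ)` is a complete ultrametric space whose distances lie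
in the closure of `S`. -/
theorem stmt16 (S : Set ℝ) (hS : S ⊆ Set.Ici 0) (h0 : (0:ℝ) ∈ S)
    (hpos : ∃ s ∈ S, (0:ℝ) < s) (M : Type*) (o : M) :
    (∀ f g : LL S M o, 0 ≤ LLdist f g) ∧
    (∀ f g : LL S M o, LLdist f g = 0 ↔ f = g) ∧
    (∀ f g : LL S M o, LLdist f g = LLdist g f) ∧
    (∀ f g h : LL S M o, LLdist f g ≤ max (LLdist f h) (LLdist h g)) ∧
    (∀ f g : LL S M o, LLdist f g ∈ closure S) ∧
    (∀ u : ℕ → LL S M o,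
      (∀ ε > (0:ℝ), ∃ N, ∀ m ≥ N, ∀ n ≥ N, LLdist (u m) (u n) < ε) →
      ∃ f : LL S M o, ∀ ε > (0:ℝ), ∃ N, ∀ n ≥ N, LLdist (u n) f < ε) := by
  refine ⟨LLdist_nonneg, ?_, ?_, ?_, ?_, ?_⟩
  · -- eq zero iff
    intro f g
    constructor
    · intro hd
      apply Subtype.ext
      funext q
      have hq : 0 < q.1 := qpos hS q
      have : f.1 ⟨q.1, q.2⟩ = g.1 ⟨q.1, q.2⟩ := agree_of_lt q.2 (by rw [hd]; exact hq)
      exact this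
    · rintro rfl
      have : A f f = {0} := by
        ext x
        constructor
        · rintro (rfl | ⟨hx, hne⟩)
          · rfl
          · exact absurd rfl hne
        · rintro rfl; exact Or.inl rfl
      rw [LLdist_eq, this, csSup_singleton]
  · -- symm
    intro f g
    have : A f g = A g f := by
      ext x
      simp only [A, Set.mem_union, Set.mem_setOf_eq]
      constructor
      · rintro (h | ⟨hx, hne⟩)
        exacts [Or.inl h, Or.inr ⟨hx, hne.symm⟩]
      · rintro (h | ⟨hx, hne⟩)
        exacts [Or.inl h, Or.inr ⟨hx, hne.symm⟩]
    rw [LLdist_eq, LLdist_eq, this]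
  · -- ultrametric
    intro f g h
    rw [LLdist_eq (f := f) (g := g)]
    refine Real.sSup_le ?_ (le_max_of_le_left (LLdist_nonneg f h))
    rintro x (rfl | ⟨hx, hne⟩)
    · exact le_max_of_le_left (LLdist_nonneg f h)
    · rcases ne_or_eq (f.1 ⟨x, hx⟩) (h.1 ⟨x, hx⟩) with h1 | h1
      · exact le_max_of_le_left (le_LLdist (Or.inr ⟨hx, h1⟩))
      · have h2 : h.1 ⟨x, hx⟩ ≠ g.1 ⟨x, hx⟩ := h1 ▸ hne
        exact le_max_of_le_right (le_LLdist (Or.inr ⟨hx, h2⟩))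
  · -- distances in closure S
    intro f g
    have hsub : A f g ⊆ S := by
      rintro x (rfl | ⟨hx, _⟩)
      · exact h0
      · exact hx.1
    exact closure_mono hsub (csSup_mem_closure (A_nonempty f g) (A_bdd f g))
  · -- completeness
    intro u hu
    choose N hN using hu
    set F : Spos S → M := fun q => (u (N q.1 (qpos hS q))).1 q with hF
    have key : ∀ (q : Spos S) (m : ℕ), N q.1 (qpos hS q) ≤ m → (u m).1 q = F q := by
      intro q m hm
      have hd := hN q.1 (qpos hS q) (N q.1 (qpos hS q)) le_rfl m hm
      have := agree_of_lt (f := u (N q.1 (qpos hS q))) (g := u m) q.2 hd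
      exact this.symm
    obtain ⟨s, hsS, hs⟩ := hpos
    obtain ⟨C0, hC0S, hC00, hbd⟩ := (u (N s hs)).2
    have hFo : ∀ q : Spos S, C0 < q.1 → s < q.1 → F q = o := by
      intro q hC0q hsq
      set m := max (N q.1 (qpos hS q)) (N s hs) with hm
      have h1 : (u m).1 q = F q := key q m (le_max_left _ _)
      have hd : LLdist (u m) (u (N s hs)) < q.1 :=
        lt_trans (hN s hs m (le_max_right _ _) (N s hs) le_rfl) hsq
      have h2 : (u m).1 ⟨q.1, q.2⟩ = (u (N s hs)).1 ⟨q.1, q.2⟩ := agree_of_lt q.2 hd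
      have h3 : (u (N s hs)).1 q = o := hbd q hC0q
      rw [← h1]
      calc (u m).1 q = (u (N s hs)).1 q := h2
        _ = o := h3
    have hFmem : ∃ C ∈ S, 0 < C ∧ ∀ q : Spos S, C < q.1 → F q = o := by
      rcases le_or_gt s C0 with hsC | hsC
      · exact ⟨C0, hC0S, hC00, fun q hq => hFo q hq (lt_of_le_of_lt hsC hq)⟩
      · exact ⟨s, hsS, hs, fun q hq => hFo q (lt_trans hsC hq) hq⟩
    refine ⟨⟨F, hFmem⟩, ?_⟩
    intro ε hε
    refine ⟨N (ε/2) (half_pos hε), fun n hn => ?_⟩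
    have hle : LLdist (u n) ⟨F, hFmem⟩ ≤ ε / 2 := by
      show sSup (A (u n) ⟨F, hFmem⟩) ≤ ε / 2
      refine Real.sSup_le ?_ (by linarith)
      rintro x (rfl | ⟨hx, hne⟩)
      · linarith
      · set q : Spos S := ⟨x, hx⟩ with hq
        set m := max (N q.1 (qpos hS q)) (N (ε/2) (half_pos hε)) with hm
        have h1 : (u m).1 q = F q := key q m (le_max_left _ _)
        have h2 : (u n).1 q ≠ (u m).1 q := by
          rw [h1]; exact hne
        have hx2 : x ∈ A (u n) (u m) := Or.inr ⟨hx, h2⟩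
        have := le_LLdist hx2
        have hd := hN (ε/2) (half_pos hε) n hn m (le_max_right _ _)
        linarith
    linarith
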